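/- Let S be a nontrivial idempotent semigroup (a band with at least two elements). Then the set M = {(p₁, p₂, p₃) ∈ S³ | p₁ = p₂ or p₁ = p₃} is not an algebraic set over S; that is, there is no set Σ of equations in three variables over the language {·} whose solution set in S³ equals M. -/

import Mathlib

set_option maxRecDepth 100000
set_option maxHeartbeats 4000000

/-- A point `p : Fin n → S` satisfies the equation `(τ, σ)` if the evaluations of the two
terms (elements of the free semigroup on `n` generators) at `p` coincide. -/
def SatisfiesEquation {S : Type*} [Semigroup S] {n : ℕ}
    (e : FreeSemigroup (Fin n) × FreeSemigroup (Fin n)) (p : Fin n → S) : Prop :=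
  FreeSemigroup.lift p e.1 = FreeSemigroup.lift p e.2

/-- A set `Y ⊆ Sⁿ` is algebraic over `S` if it is the common solution set of some set of
equations in `n` variables over the language `{·}`. -/
def IsAlgebraicSet {S : Type*} [Semigroup S] {n : ℕ} (Y : Set (Fin n → S)) : Prop :=
  ∃ Eqs : Set (FreeSemigroup (Fin n) × FreeSemigroup (Fin n)),
    Y = {p | ∀ e ∈ Eqs, SatisfiesEquation e p}

/-- The free band on two generators: 6 elements. -/
inductive B6 where
  | A | B | AB | BA | ABA | BAB
deriving DecidableEq

instance : Fintype B6 :=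
  ⟨{B6.A, B6.B, B6.AB, B6.BA, B6.ABA, B6.BAB}, by intro x; cases x <;> simp⟩

namespace B6

def hasA : B6 → Bool
  | B => false | _ => true

def hasB : B6 → Bool
  | A => false | _ => true

def fstA : B6 → Bool
  | A => true | AB => true | ABA => true | _ => false

def lstA : B6 → Bool
  | A => true | BA => true | ABA => true | _ => false

def mk (fa la ca cb : Bool) : B6 :=
  if ca && cb then
    (match fa, la with
     | true, true => ABA | true, false => AB | false, true => BA | false, false => BAB)
  else if ca then A else B

instance : Mul B6 := ⟨fun x y => mk x.fstA y.lstA (x.hasA || y.hasA) (x.hasB || y.hasB)⟩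

lemma mul_def (u v : B6) :
    u * v = mk u.fstA v.lstA (u.hasA || v.hasA) (u.hasB || v.hasB) := rfl

instance : Semigroup B6 where
  mul_assoc := by decide

end B6

/-- Evaluation of a free-band element at a pair of band elements. -/
def bval {S : Type*} [Semigroup S] (x y : S) : B6 → S
  | .A => x | .B => y | .AB => x * y | .BA => y * x | .ABA => x * y * x | .BAB => y * x * y

section Band

variable {S : Type*} [Semigroup S]

lemma band_hb3 (hband : ∀ s : S, s * s = s) (p q : S) : p * (p * q) = p * q := by
  rw [← mul_assoc, hband]

lemma band_hs1 (hband : ∀ s : S, s * s = s) (p q : S) : p * (q * (p * q)) = p * q := by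
  rw [← mul_assoc, hband]

lemma band_hs2 (hband : ∀ s : S, s * s = s) (p q r : S) :
    p * (q * (p * (q * r))) = p * (q * r) := by
  rw [show p * (q * (p * (q * r))) = (p * (q * (p * q))) * r by simp only [mul_assoc],
    band_hs1 hband, mul_assoc]

lemma bval_mul (hband : ∀ s : S, s * s = s) (x y : S) (u v : B6) :
    bval x y (u * v) = bval x y u * bval x y v := by
  cases u <;> cases v <;>
    simp [B6.mul_def, B6.mk, B6.fstA, B6.lstA, B6.hasA, B6.hasB, bval, mul_assoc,
      hband, band_hb3 hband, band_hs1 hband, band_hs2 hband]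

lemma eval_eq (hband : ∀ s : S, s * s = s) (x y : S) (g : Fin 3 → B6) (q : Fin 3 → S)
    (hq : ∀ i, q i = bval x y (g i)) (w : FreeSemigroup (Fin 3)) :
    FreeSemigroup.lift q w = bval x y (FreeSemigroup.lift g w) := by
  induction w using FreeSemigroup.recOnMul with
  | ih1 i => simp [FreeSemigroup.lift_of, hq]
  | ih2 u v hu hv => rw [map_mul, map_mul, hu, hv, ← bval_mul hband]

end Band

def gI : Fin 3 → B6 := ![B6.A, B6.A, B6.B]
def gII : Fin 3 → B6 := ![B6.A, B6.B, B6.A]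
def gW : Fin 3 → B6 := ![B6.A, B6.B, B6.B]

/-- The 24 possible triples of merged classes of a word in three variables. -/
def L : List (B6 × B6 × B6) := [
  (B6.A, B6.A, B6.A),
  (B6.A, B6.ABA, B6.ABA),
  (B6.ABA, B6.A, B6.ABA),
  (B6.ABA, B6.ABA, B6.ABA),
  (B6.A, B6.AB, B6.AB),
  (B6.ABA, B6.AB, B6.AB),
  (B6.AB, B6.A, B6.AB),
  (B6.AB, B6.ABA, B6.AB),
  (B6.A, B6.BA, B6.BA),
  (B6.ABA, B6.BA, B6.BA),
  (B6.A, B6.B, B6.B),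
  (B6.A, B6.BAB, B6.BAB),
  (B6.ABA, B6.BAB, B6.B),
  (B6.ABA, B6.BAB, B6.BAB),
  (B6.AB, B6.BA, B6.B),
  (B6.AB, B6.BA, B6.BAB),
  (B6.BA, B6.A, B6.BA),
  (B6.BA, B6.ABA, B6.BA),
  (B6.BA, B6.AB, B6.B),
  (B6.BA, B6.AB, B6.BAB),
  (B6.B, B6.A, B6.B),
  (B6.BAB, B6.A, B6.BAB),
  (B6.BAB, B6.ABA, B6.B),
  (B6.BAB, B6.ABA, B6.BAB)]

lemma LmulClosed : ∀ t ∈ L, ∀ u ∈ L, t * u ∈ L := by decide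

def Phi (w : FreeSemigroup (Fin 3)) : B6 × B6 × B6 :=
  (FreeSemigroup.lift gI w, FreeSemigroup.lift gII w, FreeSemigroup.lift gW w)

lemma Phi_mem (w : FreeSemigroup (Fin 3)) : Phi w ∈ L := by
  induction w using FreeSemigroup.recOnMul with
  | ih1 i =>
    have : Phi (FreeSemigroup.of i) = (gI i, gII i, gW i) := by
      simp [Phi, FreeSemigroup.lift_of]
    rw [this]
    fin_cases i <;> decide
  | ih2 u v hu hv =>
    have : Phi (FreeSemigroup.of u * v) = Phi (FreeSemigroup.of u) * Phi v := by
      simp [Phi, map_mul, Prod.mk_mul_mk]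
    rw [this]
    exact LmulClosed _ hu _ hv

section Key

variable {S : Type*} [Semigroup S]

lemma key1 (hband : ∀ s : S, s * s = s) (a b : S) (hne : a ≠ b) (hab : a * b ≠ a)
    (t u : B6 × B6 × B6) (ht : t ∈ L) (hu : u ∈ L)
    (e1 : bval a b t.1 = bval a b u.1) (e2 : bval b a t.1 = bval b a u.1)
    (e3 : bval a b t.2.1 = bval a b u.2.1) (e4 : bval b a t.2.1 = bval b a u.2.1) :
    bval a (a * b) t.2.2 = bval a (a * b) u.2.2 := by
  have f1 : (a) * (a) = a := by simp only [mul_assoc, hband, band_hb3 hband, band_hs1 hband, band_hs2 hband]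
  have f3 : (a) * (a * b) = a * b := by simp only [mul_assoc, hband, band_hb3 hband, band_hs1 hband, band_hs2 hband]
  have f4 : (a) * (b * a) = a * b * a := by simp only [mul_assoc, hband, band_hb3 hband, band_hs1 hband, band_hs2 hband]
  have f5 : (a) * (a * b * a) = a * b * a := by simp only [mul_assoc, hband, band_hb3 hband, band_hs1 hband, band_hs2 hband]
  have f6 : (a) * (b * a * b) = a * b := by simp only [mul_assoc, hband, band_hb3 hband, band_hs1 hband, band_hs2 hband]
  have f8 : (b) * (b) = b := by simp only [mul_assoc, hband, band_hb3 hband, band_hs1 hband, band_hs2 hband]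
  have f9 : (b) * (a * b) = b * a * b := by simp only [mul_assoc, hband, band_hb3 hband, band_hs1 hband, band_hs2 hband]
  have f10 : (b) * (b * a) = b * a := by simp only [mul_assoc, hband, band_hb3 hband, band_hs1 hband, band_hs2 hband]
  have f11 : (b) * (a * b * a) = b * a := by simp only [mul_assoc, hband, band_hb3 hband, band_hs1 hband, band_hs2 hband]
  have f12 : (b) * (b * a * b) = b * a * b := by simp only [mul_assoc, hband, band_hb3 hband, band_hs1 hband, band_hs2 hband]
  have f13 : (a * b) * (a) = a * b * a := by simp only [mul_assoc, hband, band_hb3 hband, band_hs1 hband, band_hs2 hband]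
  have f14 : (a * b) * (b) = a * b := by simp only [mul_assoc, hband, band_hb3 hband, band_hs1 hband, band_hs2 hband]
  have f15 : (a * b) * (a * b) = a * b := by simp only [mul_assoc, hband, band_hb3 hband, band_hs1 hband, band_hs2 hband]
  have f16 : (a * b) * (b * a) = a * b * a := by simp only [mul_assoc, hband, band_hb3 hband, band_hs1 hband, band_hs2 hband]
  have f17 : (a * b) * (a * b * a) = a * b * a := by simp only [mul_assoc, hband, band_hb3 hband, band_hs1 hband, band_hs2 hband]
  have f18 : (a * b) * (b * a * b) = a * b := by simp only [mul_assoc, hband, band_hb3 hband, band_hs1 hband, band_hs2 hband]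
  have f19 : (b * a) * (a) = b * a := by simp only [mul_assoc, hband, band_hb3 hband, band_hs1 hband, band_hs2 hband]
  have f20 : (b * a) * (b) = b * a * b := by simp only [mul_assoc, hband, band_hb3 hband, band_hs1 hband, band_hs2 hband]
  have f21 : (b * a) * (a * b) = b * a * b := by simp only [mul_assoc, hband, band_hb3 hband, band_hs1 hband, band_hs2 hband]
  have f22 : (b * a) * (b * a) = b * a := by simp only [mul_assoc, hband, band_hb3 hband, band_hs1 hband, band_hs2 hband]
  have f23 : (b * a) * (a * b * a) = b * a := by simp only [mul_assoc, hband, band_hb3 hband, band_hs1 hband, band_hs2 hband]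
  have f24 : (b * a) * (b * a * b) = b * a * b := by simp only [mul_assoc, hband, band_hb3 hband, band_hs1 hband, band_hs2 hband]
  have f25 : (a * b * a) * (a) = a * b * a := by simp only [mul_assoc, hband, band_hb3 hband, band_hs1 hband, band_hs2 hband]
  have f26 : (a * b * a) * (b) = a * b := by simp only [mul_assoc, hband, band_hb3 hband, band_hs1 hband, band_hs2 hband]
  have f27 : (a * b * a) * (a * b) = a * b := by simp only [mul_assoc, hband, band_hb3 hband, band_hs1 hband, band_hs2 hband]
  have f28 : (a * b * a) * (b * a) = a * b * a := by simp only [mul_assoc, hband, band_hb3 hband, band_hs1 hband, band_hs2 hband]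
  have f29 : (a * b * a) * (a * b * a) = a * b * a := by simp only [mul_assoc, hband, band_hb3 hband, band_hs1 hband, band_hs2 hband]
  have f30 : (a * b * a) * (b * a * b) = a * b := by simp only [mul_assoc, hband, band_hb3 hband, band_hs1 hband, band_hs2 hband]
  have f31 : (b * a * b) * (a) = b * a := by simp only [mul_assoc, hband, band_hb3 hband, band_hs1 hband, band_hs2 hband]
  have f32 : (b * a * b) * (b) = b * a * b := by simp only [mul_assoc, hband, band_hb3 hband, band_hs1 hband, band_hs2 hband]
  have f33 : (b * a * b) * (a * b) = b * a * b := by simp only [mul_assoc, hband, band_hb3 hband, band_hs1 hband, band_hs2 hband]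
  have f34 : (b * a * b) * (b * a) = b * a := by simp only [mul_assoc, hband, band_hb3 hband, band_hs1 hband, band_hs2 hband]
  have f35 : (b * a * b) * (a * b * a) = b * a := by simp only [mul_assoc, hband, band_hb3 hband, band_hs1 hband, band_hs2 hband]
  have f36 : (b * a * b) * (b * a * b) = b * a * b := by simp only [mul_assoc, hband, band_hb3 hband, band_hs1 hband, band_hs2 hband]
  have g1 : a * (a * b) = a * b := by simp only [mul_assoc, hband, band_hb3 hband, band_hs1 hband, band_hs2 hband]
  have g2 : (a * (a * b)) * a = a * b * a := by simp only [mul_assoc, hband, band_hb3 hband, band_hs1 hband, band_hs2 hband]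
  have g3 : ((a * b) * a) * (a * b) = a * b := by simp only [mul_assoc, hband, band_hb3 hband, band_hs1 hband, band_hs2 hband]
  fin_cases ht <;> fin_cases hu <;>
    simp only [bval] at e1 e2 e3 e4 ⊢ <;>
    first
      | grind
      | exact absurd (show a * b = a by grind) hab
      | exact absurd (show a = b by grind) hne

lemma key2 (hband : ∀ s : S, s * s = s) (a b : S) (hne : a ≠ b) (hab : a * b = a)
    (t u : B6 × B6 × B6) (ht : t ∈ L) (hu : u ∈ L)
    (e1 : bval a b t.1 = bval a b u.1) (e2 : bval b a t.1 = bval b a u.1)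
    (e3 : bval a b t.2.1 = bval a b u.2.1) (e4 : bval b a t.2.1 = bval b a u.2.1) :
    bval b a t.2.2 = bval b a u.2.2 := by
  have f1 : (a) * (a) = a := by simp only [mul_assoc, hband, band_hb3 hband, band_hs1 hband, band_hs2 hband]
  have f3 : (a) * (a * b) = a * b := by simp only [mul_assoc, hband, band_hb3 hband, band_hs1 hband, band_hs2 hband]
  have f4 : (a) * (b * a) = a * b * a := by simp only [mul_assoc, hband, band_hb3 hband, band_hs1 hband, band_hs2 hband]
  have f5 : (a) * (a * b * a) = a * b * a := by simp only [mul_assoc, hband, band_hb3 hband, band_hs1 hband, band_hs2 hband]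
  have f6 : (a) * (b * a * b) = a * b := by simp only [mul_assoc, hband, band_hb3 hband, band_hs1 hband, band_hs2 hband]
  have f8 : (b) * (b) = b := by simp only [mul_assoc, hband, band_hb3 hband, band_hs1 hband, band_hs2 hband]
  have f9 : (b) * (a * b) = b * a * b := by simp only [mul_assoc, hband, band_hb3 hband, band_hs1 hband, band_hs2 hband]
  have f10 : (b) * (b * a) = b * a := by simp only [mul_assoc, hband, band_hb3 hband, band_hs1 hband, band_hs2 hband]
  have f11 : (b) * (a * b * a) = b * a := by simp only [mul_assoc, hband, band_hb3 hband, band_hs1 hband, band_hs2 hband]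
  have f12 : (b) * (b * a * b) = b * a * b := by simp only [mul_assoc, hband, band_hb3 hband, band_hs1 hband, band_hs2 hband]
  have f13 : (a * b) * (a) = a * b * a := by simp only [mul_assoc, hband, band_hb3 hband, band_hs1 hband, band_hs2 hband]
  have f14 : (a * b) * (b) = a * b := by simp only [mul_assoc, hband, band_hb3 hband, band_hs1 hband, band_hs2 hband]
  have f15 : (a * b) * (a * b) = a * b := by simp only [mul_assoc, hband, band_hb3 hband, band_hs1 hband, band_hs2 hband]
  have f16 : (a * b) * (b * a) = a * b * a := by simp only [mul_assoc, hband, band_hb3 hband, band_hs1 hband, band_hs2 hband]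
  have f17 : (a * b) * (a * b * a) = a * b * a := by simp only [mul_assoc, hband, band_hb3 hband, band_hs1 hband, band_hs2 hband]
  have f18 : (a * b) * (b * a * b) = a * b := by simp only [mul_assoc, hband, band_hb3 hband, band_hs1 hband, band_hs2 hband]
  have f19 : (b * a) * (a) = b * a := by simp only [mul_assoc, hband, band_hb3 hband, band_hs1 hband, band_hs2 hband]
  have f20 : (b * a) * (b) = b * a * b := by simp only [mul_assoc, hband, band_hb3 hband, band_hs1 hband, band_hs2 hband]
  have f21 : (b * a) * (a * b) = b * a * b := by simp only [mul_assoc, hband, band_hb3 hband, band_hs1 hband, band_hs2 hband]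
  have f22 : (b * a) * (b * a) = b * a := by simp only [mul_assoc, hband, band_hb3 hband, band_hs1 hband, band_hs2 hband]
  have f23 : (b * a) * (a * b * a) = b * a := by simp only [mul_assoc, hband, band_hb3 hband, band_hs1 hband, band_hs2 hband]
  have f24 : (b * a) * (b * a * b) = b * a * b := by simp only [mul_assoc, hband, band_hb3 hband, band_hs1 hband, band_hs2 hband]
  have f25 : (a * b * a) * (a) = a * b * a := by simp only [mul_assoc, hband, band_hb3 hband, band_hs1 hband, band_hs2 hband]
  have f26 : (a * b * a) * (b) = a * b := by simp only [mul_assoc, hband, band_hb3 hband, band_hs1 hband, band_hs2 hband]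
  have f27 : (a * b * a) * (a * b) = a * b := by simp only [mul_assoc, hband, band_hb3 hband, band_hs1 hband, band_hs2 hband]
  have f28 : (a * b * a) * (b * a) = a * b * a := by simp only [mul_assoc, hband, band_hb3 hband, band_hs1 hband, band_hs2 hband]
  have f29 : (a * b * a) * (a * b * a) = a * b * a := by simp only [mul_assoc, hband, band_hb3 hband, band_hs1 hband, band_hs2 hband]
  have f30 : (a * b * a) * (b * a * b) = a * b := by simp only [mul_assoc, hband, band_hb3 hband, band_hs1 hband, band_hs2 hband]
  have f31 : (b * a * b) * (a) = b * a := by simp only [mul_assoc, hband, band_hb3 hband, band_hs1 hband, band_hs2 hband]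
  have f32 : (b * a * b) * (b) = b * a * b := by simp only [mul_assoc, hband, band_hb3 hband, band_hs1 hband, band_hs2 hband]
  have f33 : (b * a * b) * (a * b) = b * a * b := by simp only [mul_assoc, hband, band_hb3 hband, band_hs1 hband, band_hs2 hband]
  have f34 : (b * a * b) * (b * a) = b * a := by simp only [mul_assoc, hband, band_hb3 hband, band_hs1 hband, band_hs2 hband]
  have f35 : (b * a * b) * (a * b * a) = b * a := by simp only [mul_assoc, hband, band_hb3 hband, band_hs1 hband, band_hs2 hband]
  have f36 : (b * a * b) * (b * a * b) = b * a * b := by simp only [mul_assoc, hband, band_hb3 hband, band_hs1 hband, band_hs2 hband]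
  fin_cases ht <;> fin_cases hu <;>
    simp only [bval] at e1 e2 e3 e4 ⊢ <;>
    first
      | grind
      | exact absurd (show a = b by grind) hne

end Key

theorem not_algebraic_of_band {S : Type*} [Semigroup S] [Nontrivial S]
    (hband : ∀ x : S, x * x = x) :
    ¬ IsAlgebraicSet {p : Fin 3 → S | p 0 = p 1 ∨ p 0 = p 2} := by
  rintro ⟨Eqs, hEqs⟩
  obtain ⟨a, b, hne⟩ := exists_pair_ne S
  rw [Set.ext_iff] at hEqs
  have hsol : ∀ p : Fin 3 → S, (p 0 = p 1 ∨ p 0 = p 2) → ∀ e ∈ Eqs, SatisfiesEquation e p :=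
    fun p hp => (hEqs p).mp hp
  by_cases hab : a * b = a
  · -- witness (b, a, a)
    have hw : ∀ e ∈ Eqs, SatisfiesEquation e ![b, a, a] := by
      intro e he
      have h1 := hsol ![a, a, b] (Or.inl rfl) e he
      have h2 := hsol ![b, b, a] (Or.inl rfl) e he
      have h3 := hsol ![a, b, a] (Or.inr rfl) e he
      have h4 := hsol ![b, a, b] (Or.inr rfl) e he
      unfold SatisfiesEquation at h1 h2 h3 h4 ⊢
      rw [eval_eq hband a b gI _ (by intro i; fin_cases i <;> rfl) e.1,
          eval_eq hband a b gI _ (by intro i; fin_cases i <;> rfl) e.2] at h1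
      rw [eval_eq hband b a gI _ (by intro i; fin_cases i <;> rfl) e.1,
          eval_eq hband b a gI _ (by intro i; fin_cases i <;> rfl) e.2] at h2
      rw [eval_eq hband a b gII _ (by intro i; fin_cases i <;> rfl) e.1,
          eval_eq hband a b gII _ (by intro i; fin_cases i <;> rfl) e.2] at h3
      rw [eval_eq hband b a gII _ (by intro i; fin_cases i <;> rfl) e.1,
          eval_eq hband b a gII _ (by intro i; fin_cases i <;> rfl) e.2] at h4
      rw [eval_eq hband b a gW _ (by intro i; fin_cases i <;> rfl) e.1,
          eval_eq hband b a gW _ (by intro i; fin_cases i <;> rfl) e.2]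
      exact key2 hband a b hne hab (Phi e.1) (Phi e.2) (Phi_mem e.1) (Phi_mem e.2)
        h1 h2 h3 h4
    have hmem := (hEqs ![b, a, a]).mpr hw
    simp only [Set.mem_setOf_eq, Matrix.cons_val_zero, Matrix.cons_val_one, Matrix.head_cons,
      Matrix.cons_val_two, Matrix.tail_cons] at hmem
    rcases hmem with h | h <;> exact hne h.symm
  · -- witness (a, a*b, a*b)
    have hw : ∀ e ∈ Eqs, SatisfiesEquation e ![a, a * b, a * b] := by
      intro e he
      have h1 := hsol ![a, a, b] (Or.inl rfl) e he
      have h2 := hsol ![b, b, a] (Or.inl rfl) e he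
      have h3 := hsol ![a, b, a] (Or.inr rfl) e he
      have h4 := hsol ![b, a, b] (Or.inr rfl) e he
      unfold SatisfiesEquation at h1 h2 h3 h4 ⊢
      rw [eval_eq hband a b gI _ (by intro i; fin_cases i <;> rfl) e.1,
          eval_eq hband a b gI _ (by intro i; fin_cases i <;> rfl) e.2] at h1
      rw [eval_eq hband b a gI _ (by intro i; fin_cases i <;> rfl) e.1,
          eval_eq hband b a gI _ (by intro i; fin_cases i <;> rfl) e.2] at h2
      rw [eval_eq hband a b gII _ (by intro i; fin_cases i <;> rfl) e.1,
          eval_eq hband a b gII _ (by intro i; fin_cases i <;> rfl) e.2] at h3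
      rw [eval_eq hband b a gII _ (by intro i; fin_cases i <;> rfl) e.1,
          eval_eq hband b a gII _ (by intro i; fin_cases i <;> rfl) e.2] at h4
      rw [eval_eq hband a (a * b) gW _ (by intro i; fin_cases i <;> rfl) e.1,
          eval_eq hband a (a * b) gW _ (by intro i; fin_cases i <;> rfl) e.2]
      exact key1 hband a b hne hab (Phi e.1) (Phi e.2) (Phi_mem e.1) (Phi_mem e.2)
        h1 h2 h3 h4
    have hmem := (hEqs ![a, a * b, a * b]).mpr hw
    simp only [Set.mem_setOf_eq, Matrix.cons_val_zero, Matrix.cons_val_one, Matrix.head_cons,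
      Matrix.cons_val_two, Matrix.tail_cons] at hmem
    rcases hmem with h | h <;> exact hab h.symm
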